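/- Let $f(x) = Ax - ax^2$ with $A \in (1,2)$, $a>0$, $g_* = (A-1)/a$, $\omega_0 \in (0,1)$, and $(\bar g_n)_{n\in\mathbb{Z}}$ the orbit with $\bar g_0 = \omega_0 g_*$. For any real exponents $\gamma, \nu \ge 0$ and every integer $n > 0$, $\frac{1}{\bar g_n^{\gamma}} \sum_{0 \le p < n} \bar g_p^{\nu} \prod_{p < j < n} f'(\bar g_j) \;\le\; \frac{\omega_0^{-\gamma} g_*^{\nu - \gamma}}{A - 1} \exp\!\left[\frac{2(1-\omega_0)(1+\omega_0 - A\omega_0)}{\omega_0 (2-A)}\right]$. -/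

import Mathlib

set_option maxHeartbeats 1000000


/-- backward bound for `δg`: for all `γ, ν ≥ 0` and every integer `n > 0`,
`(1/ḡₙ^γ) ∑_{0≤p<n} ḡ_p^ν ∏_{p<j<n} f'(ḡ_j)
   ≤ ω₀^{-γ} g⋆^{ν-γ}/(A-1) · exp[2(1-ω₀)(1+ω₀-Aω₀)/(ω₀(2-A))]`. -/
theorem stmt_8 (A a : ℝ) (hA1 : 1 < A) (hA2 : A < 2) (ha : 0 < a)
    (f : ℝ → ℝ) (hf : ∀ x, f x = A * x - a * x ^ 2)
    (gs : ℝ) (hgs : gs = (A - 1) / a)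
    (ω0 : ℝ) (hω0 : ω0 ∈ Set.Ioo (0 : ℝ) 1)
    (gbar : ℤ → ℝ) (hmem : ∀ n : ℤ, gbar n ∈ Set.Ioo 0 gs)
    (h0 : gbar 0 = ω0 * gs) (hrec : ∀ n : ℤ, gbar (n + 1) = f (gbar n))
    (γ ν : ℝ) (hγ : 0 ≤ γ) (hν : 0 ≤ ν) :
    ∀ n : ℤ, 0 < n →
      (1 / gbar n ^ γ) *
          ∑ p ∈ Finset.Ico (0 : ℤ) n, gbar p ^ ν * ∏ j ∈ Finset.Ioo p n, (A - 2 * a * gbar j) ≤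
        ω0 ^ (-γ) * gs ^ (ν - γ) / (A - 1) *
          Real.exp (2 * (1 - ω0) * (1 + ω0 - A * ω0) / (ω0 * (2 - A))) := by
  obtain ⟨hw0, hw1⟩ := hω0
  have hA1' : (0:ℝ) < A - 1 := by linarith
  have h2A : (0:ℝ) < 2 - A := by linarith
  have hgs_pos : 0 < gs := by rw [hgs]; positivity
  have hgsa : a * gs = A - 1 := by rw [hgs]; field_simp
  have hgpos : ∀ m : ℤ, 0 < gbar m := fun m => (hmem m).1
  have hglt : ∀ m : ℤ, gbar m < gs := fun m => (hmem m).2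
  have hupos : ∀ m : ℤ, 0 < gs - gbar m := fun m => sub_pos.2 (hglt m)
  set L : ℝ := 1 + ω0 - A * ω0 with hLdef
  have hLpos : 0 < L := by nlinarith [mul_pos (sub_pos.2 hw1) hA1']
  have hL1 : L < 1 := by nlinarith [mul_pos hw0 hA1']
  have h1Lpos : 0 < 1 - L := by linarith
  have h1L : 1 - L = ω0 * (A - 1) := by rw [hLdef]; ring
  have h2AL : 2 - A ≤ L := by nlinarith [mul_nonneg hA1'.le (sub_pos.2 hw1).le]
  have hgsν : (0:ℝ) < gs ^ ν := Real.rpow_pos_of_pos hgs_pos ν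
  -- monotonicity: ω0 * gs ≤ gbar n for n ≥ 0
  have hmono : ∀ n : ℤ, 0 ≤ n → ω0 * gs ≤ gbar n := by
    refine Int.le_induction (motive := fun k _ => ω0 * gs ≤ gbar k) (le_of_eq h0.symm) ?_
    intro n hn ih'
    have h := hglt n
    have hg := hgpos n
    have hArw : A * gbar n - a * gbar n ^ 2 = gbar n + a * gbar n * (gs - gbar n) := by
      linear_combination (-gbar n) * hgsa
    rw [hrec, hf, hArw]
    nlinarith [mul_nonneg (mul_nonneg ha.le hg.le) (sub_pos.2 h).le]
  -- exact contraction identity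
  have hfac : ∀ n : ℤ, gs - gbar (n + 1) = (gs - gbar n) * (1 - a * gbar n) := by
    intro n
    rw [hrec, hf, hgs]
    field_simp
    try ring
  have hagL : ∀ n : ℤ, 0 ≤ n → 1 - a * gbar n ≤ L := by
    intro n hn
    have h1 := mul_le_mul_of_nonneg_left (hmono n hn) ha.le
    have h2 : a * (ω0 * gs) = ω0 * (A - 1) := by rw [hgs]; field_simp; try ring
    nlinarith [h1, h2]
  have hfacL : ∀ n : ℤ, 0 ≤ n → gs - gbar (n + 1) ≤ L * (gs - gbar n) := by
    intro n hn
    rw [hfac]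
    have h1 := hagL n hn
    nlinarith [hupos n]
  have hdpos : ∀ j : ℤ, 0 < A - 2 * a * gbar j := by
    intro j
    have h := hglt j
    nlinarith [mul_lt_mul_of_pos_left h ha]
  have hSnonneg : ∀ n : ℤ, 0 ≤ ∑ p ∈ Finset.Ico (0 : ℤ) n,
      gbar p ^ ν * ∏ j ∈ Finset.Ioo p n, (A - 2 * a * gbar j) := by
    intro n
    apply Finset.sum_nonneg
    intro p _
    exact mul_nonneg (Real.rpow_nonneg (hgpos p).le ν)
      (Finset.prod_nonneg fun j _ => (hdpos j).le)
  -- pointwise derivative bound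
  have hderiv_le : ∀ j : ℤ, 0 ≤ j →
      A - 2 * a * gbar j ≤ L * Real.exp (a * (gs - gbar j) / (2 - A)) := by
    intro j hj
    have hu := hupos j
    have hag := hagL j hj
    have ht : a * (gs - gbar j) ≤ L * (a * (gs - gbar j) / (2 - A)) := by
      rw [← mul_div_assoc, le_div_iff₀ h2A]
      nlinarith [mul_nonneg (mul_nonneg ha.le hu.le) (sub_nonneg.2 h2AL)]
    have hexp : a * (gs - gbar j) / (2 - A) + 1 ≤ Real.exp (a * (gs - gbar j) / (2 - A)) :=
      Real.add_one_le_exp _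
    nlinarith [mul_le_mul_of_nonneg_left hexp hLpos.le, ht, hag, hgsa]
  -- main induction
  have main : ∀ n : ℤ, 1 ≤ n →
      (∑ p ∈ Finset.Ico (0 : ℤ) n, gbar p ^ ν * ∏ j ∈ Finset.Ioo p n, (A - 2 * a * gbar j)) ≤
        gs ^ ν / (1 - L) *
          Real.exp (a * (L * (gs - gbar 0) - (gs - gbar n)) / ((1 - L) * (2 - A))) := by
    refine Int.le_induction (motive := fun k _ =>
      (∑ p ∈ Finset.Ico (0 : ℤ) k, gbar p ^ ν * ∏ j ∈ Finset.Ioo p k, (A - 2 * a * gbar j)) ≤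
        gs ^ ν / (1 - L) *
          Real.exp (a * (L * (gs - gbar 0) - (gs - gbar k)) / ((1 - L) * (2 - A)))) ?_ ?_
    · show (∑ p ∈ Finset.Ico (0 : ℤ) 1, gbar p ^ ν * ∏ j ∈ Finset.Ioo p 1, (A - 2 * a * gbar j)) ≤
        gs ^ ν / (1 - L) *
          Real.exp (a * (L * (gs - gbar 0) - (gs - gbar 1)) / ((1 - L) * (2 - A)))
      have hIco : Finset.Ico (0:ℤ) 1 = {0} := by
        ext x; simp only [Finset.mem_Ico, Finset.mem_singleton]; omega
      have hIoo : Finset.Ioo (0:ℤ) 1 = ∅ := by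
        ext x; simp only [Finset.mem_Ioo, Finset.notMem_empty, iff_false]; omega
      rw [hIco, Finset.sum_singleton, hIoo, Finset.prod_empty, mul_one]
      have hf1 : gs - gbar 1 ≤ L * (gs - gbar 0) := by
        have h := hfacL 0 le_rfl
        norm_num at h
        linarith
      have e2 : 0 ≤ a * (L * (gs - gbar 0) - (gs - gbar 1)) / ((1 - L) * (2 - A)) := by
        apply div_nonneg _ (mul_pos h1Lpos h2A).le
        exact mul_nonneg ha.le (by linarith)
      have e3 : (1:ℝ) ≤ Real.exp (a * (L * (gs - gbar 0) - (gs - gbar 1)) / ((1 - L) * (2 - A))) :=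
        Real.one_le_exp e2
      calc gbar 0 ^ ν ≤ gs ^ ν := Real.rpow_le_rpow (hgpos 0).le (hglt 0).le hν
        _ = gs ^ ν * 1 := (mul_one _).symm
        _ ≤ gs ^ ν / (1 - L) *
            Real.exp (a * (L * (gs - gbar 0) - (gs - gbar 1)) / ((1 - L) * (2 - A))) := by
          apply mul_le_mul _ e3 zero_le_one (div_pos hgsν h1Lpos).le
          rw [le_div_iff₀ h1Lpos]
          nlinarith [mul_nonneg hgsν.le hLpos.le]
    · intro n hn ih
      beta_reduce at ih ⊢
      have hn0 : (0:ℤ) ≤ n := by linarith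
      have h1 : Finset.Ico (0:ℤ) (n+1) = insert n (Finset.Ico (0:ℤ) n) := by
        ext x; simp only [Finset.mem_Ico, Finset.mem_insert]; omega
      have h3 : Finset.Ioo n (n+1) = (∅ : Finset ℤ) := by
        ext x; simp only [Finset.mem_Ioo, Finset.notMem_empty, iff_false]; omega
      rw [h1, Finset.sum_insert (by simp), h3, Finset.prod_empty, mul_one]
      have h4 : ∑ p ∈ Finset.Ico (0:ℤ) n, gbar p ^ ν * ∏ j ∈ Finset.Ioo p (n+1),
            (A - 2 * a * gbar j)
          = (A - 2 * a * gbar n) * ∑ p ∈ Finset.Ico (0:ℤ) n,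
              gbar p ^ ν * ∏ j ∈ Finset.Ioo p n, (A - 2 * a * gbar j) := by
        rw [Finset.mul_sum]
        apply Finset.sum_congr rfl
        intro p hp
        simp only [Finset.mem_Ico] at hp
        have h2 : Finset.Ioo p (n+1) = insert n (Finset.Ioo p n) := by
          ext x; simp only [Finset.mem_Ioo, Finset.mem_insert]; omega
        rw [h2, Finset.prod_insert (by simp)]
        ring
      rw [h4]
      have hfn := hfacL n hn0
      have hxstep : a * (L * (gs - gbar 0) - (gs - gbar n)) / ((1 - L) * (2 - A))
            + a * (gs - gbar n) / (2 - A)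
          ≤ a * (L * (gs - gbar 0) - (gs - gbar (n+1))) / ((1 - L) * (2 - A)) := by
        have key : a * (L * (gs - gbar 0) - (gs - gbar (n+1))) / ((1 - L) * (2 - A))
              - (a * (L * (gs - gbar 0) - (gs - gbar n)) / ((1 - L) * (2 - A))
                + a * (gs - gbar n) / (2 - A))
            = a * (L * (gs - gbar n) - (gs - gbar (n+1))) / ((1 - L) * (2 - A)) := by
          field_simp
          ring
        have hnn : 0 ≤ a * (L * (gs - gbar n) - (gs - gbar (n+1))) / ((1 - L) * (2 - A)) :=
          div_nonneg (mul_nonneg ha.le (by linarith)) (mul_pos h1Lpos h2A).le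
        linarith [key, hnn]
      have hXnn : 0 ≤ a * (L * (gs - gbar 0) - (gs - gbar (n+1))) / ((1 - L) * (2 - A)) := by
        have h2 : gbar 0 ≤ gbar n := h0 ▸ hmono n hn0
        have h3' : gs - gbar (n+1) ≤ L * (gs - gbar 0) := by nlinarith [hupos n]
        exact div_nonneg (mul_nonneg ha.le (by linarith)) (mul_pos h1Lpos h2A).le
      have hd := hderiv_le n hn0
      have b1 : (A - 2 * a * gbar n) * (∑ p ∈ Finset.Ico (0:ℤ) n,
            gbar p ^ ν * ∏ j ∈ Finset.Ioo p n, (A - 2 * a * gbar j))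
          ≤ (L * Real.exp (a * (gs - gbar n) / (2 - A))) *
            (gs ^ ν / (1 - L) *
              Real.exp (a * (L * (gs - gbar 0) - (gs - gbar n)) / ((1 - L) * (2 - A)))) :=
        mul_le_mul hd ih (hSnonneg n) (mul_pos hLpos (Real.exp_pos _)).le
      have b2 : (L * Real.exp (a * (gs - gbar n) / (2 - A))) *
            (gs ^ ν / (1 - L) *
              Real.exp (a * (L * (gs - gbar 0) - (gs - gbar n)) / ((1 - L) * (2 - A))))
          ≤ L * (gs ^ ν / (1 - L)) *
            Real.exp (a * (L * (gs - gbar 0) - (gs - gbar (n+1))) / ((1 - L) * (2 - A))) := by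
        have e : (L * Real.exp (a * (gs - gbar n) / (2 - A))) *
              (gs ^ ν / (1 - L) *
                Real.exp (a * (L * (gs - gbar 0) - (gs - gbar n)) / ((1 - L) * (2 - A))))
            = L * (gs ^ ν / (1 - L)) *
              Real.exp (a * (L * (gs - gbar 0) - (gs - gbar n)) / ((1 - L) * (2 - A))
                + a * (gs - gbar n) / (2 - A)) := by
          rw [Real.exp_add]; ring
        rw [e]
        exact mul_le_mul_of_nonneg_left (Real.exp_le_exp.2 hxstep)
          (mul_nonneg hLpos.le (div_pos hgsν h1Lpos).le)
      have b3 : gbar n ^ ν ≤ (1 - L) * (gs ^ ν / (1 - L)) *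
            Real.exp (a * (L * (gs - gbar 0) - (gs - gbar (n+1))) / ((1 - L) * (2 - A))) := by
        have hq : (1 - L) * (gs ^ ν / (1 - L)) = gs ^ ν := by field_simp
        rw [hq]
        calc gbar n ^ ν ≤ gs ^ ν := Real.rpow_le_rpow (hgpos n).le (hglt n).le hν
          _ = gs ^ ν * 1 := (mul_one _).symm
          _ ≤ gs ^ ν * Real.exp (a * (L * (gs - gbar 0) - (gs - gbar (n+1)))
                / ((1 - L) * (2 - A))) :=
            mul_le_mul_of_nonneg_left (Real.one_le_exp hXnn) hgsν.le
      have hsum : L * (gs ^ ν / (1 - L)) *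
            Real.exp (a * (L * (gs - gbar 0) - (gs - gbar (n+1))) / ((1 - L) * (2 - A)))
          + (1 - L) * (gs ^ ν / (1 - L)) *
            Real.exp (a * (L * (gs - gbar 0) - (gs - gbar (n+1))) / ((1 - L) * (2 - A)))
          = gs ^ ν / (1 - L) *
            Real.exp (a * (L * (gs - gbar 0) - (gs - gbar (n+1))) / ((1 - L) * (2 - A))) := by
        ring
      linarith [b1.trans b2, b3, hsum]
  -- conclusion
  intro n hn
  have hn1 : (1:ℤ) ≤ n := hn
  have hn0 : (0:ℤ) ≤ n := by linarith
  have hwgs : (0:ℝ) < ω0 * gs := mul_pos hw0 hgs_pos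
  have hD : (0:ℝ) < (1 - L) * (2 - A) := mul_pos h1Lpos h2A
  have hXle : a * (L * (gs - gbar 0) - (gs - gbar n)) / ((1 - L) * (2 - A))
      ≤ (1 - ω0) * L / (ω0 * (2 - A)) := by
    have h1 : a * (L * (gs - gbar 0) - (gs - gbar n)) ≤ a * (L * (gs - gbar 0)) :=
      mul_le_mul_of_nonneg_left (by linarith [hupos n]) ha.le
    have h2 : a * (L * (gs - gbar 0)) / ((1 - L) * (2 - A)) = (1 - ω0) * L / (ω0 * (2 - A)) := by
      rw [h0, h1L, hgs]
      field_simp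
    calc a * (L * (gs - gbar 0) - (gs - gbar n)) / ((1 - L) * (2 - A))
        ≤ a * (L * (gs - gbar 0)) / ((1 - L) * (2 - A)) := by
          rw [div_le_div_iff₀ hD hD]
          exact mul_le_mul_of_nonneg_right h1 hD.le
      _ = _ := h2
  have hMle : (∑ p ∈ Finset.Ico (0:ℤ) n, gbar p ^ ν * ∏ j ∈ Finset.Ioo p n,
        (A - 2 * a * gbar j))
      ≤ gs ^ ν / (1 - L) * Real.exp ((1 - ω0) * L / (ω0 * (2 - A))) :=
    (main n hn1).trans (mul_le_mul_of_nonneg_left (Real.exp_le_exp.2 hXle)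
      (div_pos hgsν h1Lpos).le)
  have hginv : 1 / gbar n ^ γ ≤ 1 / (ω0 * gs) ^ γ :=
    one_div_le_one_div_of_le (Real.rpow_pos_of_pos hwgs γ)
      (Real.rpow_le_rpow hwgs.le (hmono n hn0) hγ)
  have hexpE2 : 1 / ω0 ≤ Real.exp ((1 - ω0) * L / (ω0 * (2 - A))) := by
    have h1 : (1 - ω0) / ω0 ≤ (1 - ω0) * L / (ω0 * (2 - A)) := by
      rw [div_le_div_iff₀ hw0 (mul_pos hw0 h2A)]
      nlinarith [mul_nonneg (mul_nonneg hw0.le (sub_nonneg.2 hw1.le)) (sub_nonneg.2 h2AL)]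
    calc 1 / ω0 = (1 - ω0) / ω0 + 1 := by field_simp; ring
      _ ≤ Real.exp ((1 - ω0) / ω0) := Real.add_one_le_exp _
      _ ≤ _ := Real.exp_le_exp.2 h1
  have hcoefpos : (0:ℝ) ≤ ω0 ^ (-γ) * gs ^ (ν - γ) / (A - 1) :=
    div_nonneg (mul_nonneg (Real.rpow_nonneg hw0.le _) (Real.rpow_nonneg hgs_pos.le _)) hA1'.le
  have hcoef : 1 / (ω0 * gs) ^ γ * (gs ^ ν / (1 - L))
      = ω0 ^ (-γ) * gs ^ (ν - γ) / (A - 1) * (1 / ω0) := by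
    rw [Real.mul_rpow hw0.le hgs_pos.le, Real.rpow_neg hw0.le, Real.rpow_sub hgs_pos, h1L]
    have p1 : (0:ℝ) < ω0 ^ γ := Real.rpow_pos_of_pos hw0 γ
    have p2 : (0:ℝ) < gs ^ γ := Real.rpow_pos_of_pos hgs_pos γ
    field_simp
    try ring
    try simp
  calc (1 / gbar n ^ γ) * ∑ p ∈ Finset.Ico (0 : ℤ) n,
        gbar p ^ ν * ∏ j ∈ Finset.Ioo p n, (A - 2 * a * gbar j)
      ≤ (1 / (ω0 * gs) ^ γ) * (gs ^ ν / (1 - L) * Real.exp ((1 - ω0) * L / (ω0 * (2 - A)))) :=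
        mul_le_mul hginv hMle (hSnonneg n)
          (one_div_nonneg.2 (Real.rpow_pos_of_pos hwgs γ).le)
    _ = ω0 ^ (-γ) * gs ^ (ν - γ) / (A - 1) *
          ((1 / ω0) * Real.exp ((1 - ω0) * L / (ω0 * (2 - A)))) := by
        rw [← mul_assoc, hcoef, mul_assoc]
    _ ≤ ω0 ^ (-γ) * gs ^ (ν - γ) / (A - 1) *
          (Real.exp ((1 - ω0) * L / (ω0 * (2 - A))) *
            Real.exp ((1 - ω0) * L / (ω0 * (2 - A)))) :=
        mul_le_mul_of_nonneg_left
          (mul_le_mul_of_nonneg_right hexpE2 (Real.exp_nonneg _)) hcoefpos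
    _ = ω0 ^ (-γ) * gs ^ (ν - γ) / (A - 1) *
          Real.exp (2 * (1 - ω0) * L / (ω0 * (2 - A))) := by
        rw [← Real.exp_add]
        congr 1
        ring
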